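/- Let α > −1, let q ≥ 0 be an integer, and let n ≥ 1 be an integer. Then for every real x, d/dx P_{2n+1}^{α,q}(x) = P_{2n}^{α+1,q}(x) + 2n · x · (1+x) · P_{2n−2}^{α+2,q+1}(x); equivalently, d/dx P_{2n+1}^{α,q}(x) = P_{2n}^{α+1,q}(x) + 2n · x · P_{2n−1}^{α+1,q+1}(x). -/

import Mathlib

open MeasureTheory intervalIntegral Polynomial

/-- Pochhammer symbol `(a)_k = a (a+1) ⋯ (a+k-1)`. -/
noncomputable def poch (a : ℝ) (k : ℕ) : ℝ := ∏ i ∈ Finset.range k, (a + i)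

/-- `Peven α q n x = P_{2n}^{α,q}(x)`, the monic generalized Gegenbauer-type polynomial
`Σ_{k=0}^{n} (−n)_k (−n−q−1/2)_k / (k! (−2n−α−q−1/2)_k) x^{2n−2k}`. -/
noncomputable def Peven (α : ℝ) (q n : ℕ) (x : ℝ) : ℝ :=
  ∑ k ∈ Finset.range (n + 1),
    poch (-(n : ℝ)) k * poch (-(n : ℝ) - q - 1/2) k /
      ((Nat.factorial k : ℝ) * poch (-(2 * (n : ℝ)) - α - q - 1/2) k) * x ^ (2*n - 2*k)

/-- `Podd α q n x = P_{2n+1}^{α,q}(x) = (1+x) P_{2n}^{α+1,q}(x)`. -/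
noncomputable def Podd (α : ℝ) (q n : ℕ) (x : ℝ) : ℝ := (1 + x) * Peven (α + 1) q n x

/-- `P α q n x = P_n^{α,q}(x)`. -/
noncomputable def P (α : ℝ) (q : ℕ) (n : ℕ) (x : ℝ) : ℝ :=
  if Even n then Peven α q (n / 2) x else Podd α q (n / 2) x

lemma poch_succ (a : ℝ) (k : ℕ) : poch a (k+1) = poch a k * (a + k) :=
  Finset.prod_range_succ _ _

lemma poch_succ' (a : ℝ) (k : ℕ) : poch a (k+1) = a * poch (a+1) k := by
  rw [poch, Finset.prod_range_succ', mul_comm]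
  congr 1
  · norm_num
  · apply Finset.prod_congr rfl
    intro i _
    push_cast
    ring

lemma key (n k : ℕ) : poch (-(n:ℝ)) k * (2*n - 2*k) = 2*n * poch (1 - n) k := by
  cases k with
  | zero => simp [poch]
  | succ k =>
    rw [poch_succ', poch_succ, show (-(n:ℝ))+1 = 1 - n by ring]
    push_cast
    ring

lemma hasDerivAt_Peven (β : ℝ) (q n : ℕ) (hn : 1 ≤ n) (x : ℝ) :
    HasDerivAt (fun y => Peven β q n y)
      (2 * n * x * Peven (β+1) (q+1) (n-1) x) x := by
  have h : HasDerivAt (fun y => Peven β q n y)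
      (∑ k ∈ Finset.range (n + 1),
        poch (-(n : ℝ)) k * poch (-(n : ℝ) - q - 1/2) k /
          ((Nat.factorial k : ℝ) * poch (-(2 * (n : ℝ)) - β - q - 1/2) k) *
          ((2*n - 2*k : ℕ) * x ^ (2*n - 2*k - 1))) x := by
    unfold Peven
    apply HasDerivAt.fun_sum
    intro k _
    exact (hasDerivAt_pow _ x).const_mul _
  convert h using 1
  rw [Finset.sum_range_succ]
  have h0 : ((2*n - 2*n : ℕ) : ℝ) = 0 := by norm_num
  rw [h0, zero_mul, mul_zero, add_zero]
  rw [Peven, show n - 1 + 1 = n from by omega, Finset.mul_sum]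
  apply Finset.sum_congr rfl
  intro k hk
  have hkn : k < n := Finset.mem_range.mp hk
  have h1 : ((n-1:ℕ):ℝ) = (n:ℝ) - 1 := by rw [Nat.cast_sub hn, Nat.cast_one]
  have h2 : 2*n - 2*k - 1 = 2*(n-1) - 2*k + 1 := by omega
  have h3 : ((2*n - 2*k : ℕ) : ℝ) = 2*n - 2*k := by
    rw [Nat.cast_sub (by omega)]; push_cast; ring
  rw [h1, h2, h3, pow_succ]
  push_cast
  rw [show -((n:ℝ)-1) = 1 - n from by ring,
      show (1:ℝ) - (n:ℝ) - ((q:ℝ)+1) - 1/2 = -(n:ℝ) - q - 1/2 from by ring,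
      show -(2*((n:ℝ)-1)) - (β+1) - ((q:ℝ)+1) - 1/2 = -(2*(n:ℝ)) - β - q - 1/2 from by ring]
  linear_combination (-(poch (-(n:ℝ) - q - 1/2) k /
      ((Nat.factorial k : ℝ) * poch (-(2*(n:ℝ)) - β - q - 1/2) k) *
      (x^(2*(n-1)-2*k) * x))) * key n k

/-- Derivative formula: `(P_{2n+1}^{α,q})'(x) = P_{2n}^{α+1,q}(x) + 2n·x·(1+x)·P_{2n−2}^{α+2,q+1}(x)
= P_{2n}^{α+1,q}(x) + 2n·x·P_{2n−1}^{α+1,q+1}(x)`. -/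
theorem deriv_Podd (α : ℝ) (hα : -1 < α) (q : ℕ) (n : ℕ) (hn : 1 ≤ n) :
    ∀ x : ℝ,
      deriv (Podd α q n) x
          = Peven (α + 1) q n x
            + 2 * (n : ℝ) * x * ((1 + x) * Peven (α + 2) (q + 1) (n - 1) x) ∧
      deriv (Podd α q n) x
          = Peven (α + 1) q n x + 2 * (n : ℝ) * x * Podd (α + 1) (q + 1) (n - 1) x := by
  intro x
  have hp : HasDerivAt (fun y => Podd α q n y)
      (Peven (α + 1) q n x + 2 * (n : ℝ) * x * ((1 + x) * Peven (α + 2) (q + 1) (n - 1) x)) x := by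
    have h1 : HasDerivAt (fun y : ℝ => 1 + y) 1 x := (hasDerivAt_id x).const_add 1
    have h2 := hasDerivAt_Peven (α + 1) q n hn x
    have := h1.mul h2
    unfold Podd
    refine this.congr_deriv ?_
    rw [show α + 1 + 1 = α + 2 from by ring]
    ring
  have hd := hp.deriv
  refine ⟨hd, ?_⟩
  rw [hd, Podd, show α + 1 + 1 = α + 2 from by ring]
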